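/- Let R be a commutative ring and q, m, r ∈ R. For all natural numbers n and s: (m*[s]_q + r)^n = \sum_{k=0}^{n} m^k * W_{m,r,q}(n,k) * [s]_{q,k}, where [s]_{q,k} = \prod_{i=0}^{k-1} [s-i]_q is the q-falling factorial. -/

import Mathlib

/-- The q-integer [n]_q. -/
def qInt {R : Type*} [CommRing R] (q : R) (n : ℕ) : R :=
  ∑ i ∈ Finset.range n, q ^ i


/-- The (q,r)-Whitney numbers of the second kind. -/
def qWhitney {R : Type*} [CommRing R] (q m r : R) : ℕ → ℕ → R
  | 0, 0 => 1
  | 0, _ + 1 => 0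
  | n + 1, 0 => r * qWhitney q m r n 0
  | n + 1, k + 1 =>
      q ^ k * qWhitney q m r n k + (m * qInt q (k + 1) + r) * qWhitney q m r n (k + 1)

lemma qInt_zero {R : Type*} [CommRing R] (q : R) : qInt q 0 = 0 := by
  simp [qInt]

lemma qInt_add {R : Type*} [CommRing R] (q : R) (a b : ℕ) :
    qInt q (a + b) = qInt q a + q ^ a * qInt q b := by
  simp only [qInt, Finset.sum_range_add, pow_add, Finset.mul_sum]

lemma qWhitney_zero_of_lt {R : Type*} [CommRing R] (q m r : R) :
    ∀ n k : ℕ, n < k → qWhitney q m r n k = 0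
  | 0, k + 1, _ => rfl
  | n + 1, k + 1, h => by
    have h1 := qWhitney_zero_of_lt q m r n k (by omega)
    have h2 := qWhitney_zero_of_lt q m r n (k + 1) (by omega)
    simp [qWhitney, h1, h2]

lemma fall_vanish {R : Type*} [CommRing R] (q : R) {s k : ℕ} (h : s < k) :
    ∏ i ∈ Finset.range k, qInt q (s - i) = 0 := by
  apply Finset.prod_eq_zero (Finset.mem_range.mpr h)
  simp [qInt_zero]

lemma key {R : Type*} [CommRing R] (q m r : R) (s k : ℕ) :
    (m * qInt q s + r) * ∏ i ∈ Finset.range k, qInt q (s - i) =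
      m * q ^ k * ∏ i ∈ Finset.range (k + 1), qInt q (s - i) +
        (m * qInt q k + r) * ∏ i ∈ Finset.range k, qInt q (s - i) := by
  rcases lt_or_ge s k with h | h
  · rw [fall_vanish q h, fall_vanish q (by omega : s < k + 1)]
    ring
  · have hs : qInt q s = qInt q k + q ^ k * qInt q (s - k) := by
      rw [← qInt_add]; congr 1; omega
    rw [Finset.prod_range_succ, hs]
    ring

/-- Expansion of (m [s]_q + r)^n via (q,r)-Whitney numbers and q-falling factorials. -/
theorem qWhitney_expansion {R : Type*} [CommRing R] (q m r : R) (n s : ℕ) :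
    (m * qInt q s + r) ^ n =
      ∑ k ∈ Finset.range (n + 1),
        m ^ k * qWhitney q m r n k * ∏ i ∈ Finset.range k, qInt q (s - i) := by
  set F : ℕ → R := fun k => ∏ i ∈ Finset.range k, qInt q (s - i) with hF
  set W : ℕ → ℕ → R := qWhitney q m r with hW
  induction n with
  | zero => simp [hW, qWhitney, hF]
  | succ n ih =>
    set A : ℕ → R := fun k => m ^ (k + 1) * q ^ k * W n k * F (k + 1) with hA
    set B : ℕ → R := fun k => (m * qInt q k + r) * (m ^ k * W n k * F k) with hB
    have lhs_eq : (m * qInt q s + r) ^ (n + 1) =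
        (∑ k ∈ Finset.range (n + 1), A k) + ∑ k ∈ Finset.range (n + 1), B k := by
      rw [pow_succ, ih, Finset.sum_mul, ← Finset.sum_add_distrib]
      refine Finset.sum_congr rfl fun k _ => ?_
      have hk := key q m r s k
      calc (m ^ k * W n k * F k) * (m * qInt q s + r)
          = (m ^ k * W n k) * ((m * qInt q s + r) * F k) := by ring
        _ = (m ^ k * W n k) *
            (m * q ^ k * F (k + 1) + (m * qInt q k + r) * F k) := by rw [hF]; rw [hk]
        _ = A k + B k := by simp only [hA, hB]; ring
    rw [lhs_eq]
    have rhs_eq : ∑ k ∈ Finset.range (n + 1 + 1), m ^ k * W (n + 1) k * F k =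
        (∑ k ∈ Finset.range (n + 1), (A k + B (k + 1))) + B 0 := by
      rw [Finset.sum_range_succ']
      congr 1
      · refine Finset.sum_congr rfl fun k _ => ?_
        have hrec : W (n + 1) (k + 1) =
            q ^ k * W n k + (m * qInt q (k + 1) + r) * W n (k + 1) := by
          rw [hW]; rfl
        rw [hrec]
        simp only [hA, hB]
        ring
      · have h0 : W (n + 1) 0 = r * W n 0 := by rw [hW]; rfl
        simp [hB, hF, h0, qInt_zero]
    rw [rhs_eq, Finset.sum_add_distrib]
    have hb : ∑ k ∈ Finset.range (n + 1), B (k + 1) + B 0 =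
        ∑ k ∈ Finset.range (n + 1), B k := by
      rw [← Finset.sum_range_succ' B (n + 1), Finset.sum_range_succ]
      have : W n (n + 1) = 0 := qWhitney_zero_of_lt q m r n (n + 1) (by omega)
      simp [hB, this]
    rw [add_assoc, hb]
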